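/- Under a PHPP ψ (as in Theorem 1), if X is nonnegative, regular, and satisfies X_k = ψ_k(X_{k+1}) for k < K and X_K = ψ_K·A_K, then A_t > 0 for all 0 ≤ t ≤ K, and Z_k := X_k/A_k < 1 for k = 0,...,K-1. -/

import Mathlib

open MeasureTheory Finset

/-- under a PHPP, a nonnegative regular consumption process keeps the
account strictly positive on `[0,K]`, and `Z_k = X_k/A_k < 1` for `k < K`. -/
theorem PHPP_account_positive
    {Ω : Type*} {m : MeasurableSpace Ω} (K : ℕ) (ℱ : Filtration ℝ m)
    (S A : ℝ → Ω → ℝ) (X : ℕ → Ω → ℝ)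
    (hSadapted : Adapted ℱ S)
    (hSpos : ∀ t ω, 0 < S t ω)
    (ψ : ℕ → (Ω → ℝ) → (Ω → ℝ)) (ψK : Ω → ℝ)
    (hψmeas : ∀ k < K, ∀ f : Ω → ℝ,
      Measurable[ℱ ((k : ℝ) + 1)] f → Measurable[ℱ (k : ℝ)] (ψ k f))
    (hψpos : ∀ k < K, ∀ f : Ω → ℝ, (∀ ω, 0 ≤ f ω) → ∀ ω, 0 ≤ ψ k f ω)
    (hψneg : ∀ k < K, ∀ f : Ω → ℝ, (∀ ω, f ω ≤ 0) → ∀ ω, ψ k f ω ≤ 0)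
    (hψhom : ∀ k < K, ∀ f g : Ω → ℝ,
      Measurable[ℱ ((k : ℝ) + 1)] f → Measurable[ℱ (k : ℝ)] g →
      (∀ ω, 0 ≤ g ω) → ψ k (fun ω => g ω * f ω) = fun ω => g ω * ψ k f ω)
    (hψKmeas : Measurable[ℱ (K : ℝ)] ψK) (hψK01 : ∀ ω, 0 ≤ ψK ω ∧ ψK ω ≤ 1)
    (hXadapted : ∀ k : ℕ, Measurable[ℱ (k : ℝ)] (X k))
    (hXnonneg : ∀ k ≤ K, ∀ ω, 0 ≤ X k ω)
    (hXregular : ∀ k ≤ K, ∀ ω, X k ω ≤ A (k : ℝ) ω)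
    (hA0 : ∀ ω, A 0 ω = S 0 ω)
    (hArec : ∀ k < K, ∀ (t : ℝ), (k : ℝ) < t → t ≤ (k : ℝ) + 1 → ∀ ω,
      A t ω = (A (k : ℝ) ω - X k ω) * S t ω / S (k : ℝ) ω)
    (hproj : ∀ k < K, X k = ψ k (X (k + 1)))
    (hfinal : ∀ ω, X K ω = ψK ω * A (K : ℝ) ω) :
    (∀ t : ℝ, 0 ≤ t → t ≤ (K : ℝ) → ∀ ω, 0 < A t ω) ∧
    (∀ k < K, ∀ ω, X k ω / A (k : ℝ) ω < 1) := by
  have castk : ∀ k : ℕ, (((k+1) : ℕ) : ℝ) = (k : ℝ) + 1 := by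
    intro k; push_cast; ring
  -- strict inequality X k < A k given positivity and measurability of A k
  have strict : ∀ k, k < K → Measurable[ℱ (k : ℝ)] (A (k : ℝ)) →
      (∀ ω, 0 < A (k : ℝ) ω) → ∀ ω, X k ω < A (k : ℝ) ω := by
    intro k hk hmeas hpos ω0
    by_contra hcon
    push_neg at hcon
    -- hcon : A k ω0 ≤ X k ω0
    have hA1 : ∀ ω, A ((k : ℝ) + 1) ω
        = (A (k : ℝ) ω - X k ω) * S ((k : ℝ) + 1) ω / S (k : ℝ) ω :=
      hArec k hk ((k : ℝ) + 1) (by linarith) le_rfl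
    have hXz : ∀ ω, A (k : ℝ) ω ≤ X k ω → X (k + 1) ω = 0 := by
      intro ω hω
      have he : X k ω = A (k : ℝ) ω := le_antisymm (hXregular k hk.le ω) hω
      have hz : A ((k : ℝ) + 1) ω = 0 := by rw [hA1 ω, he]; ring
      have h1 := hXregular (k + 1) hk ω
      rw [castk k, hz] at h1
      exact le_antisymm h1 (hXnonneg (k + 1) hk ω)
    have hgmeas : Measurable[ℱ (k : ℝ)]
        (fun ω => if A (k : ℝ) ω ≤ X k ω then (0 : ℝ) else 1) :=
      Measurable.ite (measurableSet_le hmeas (hXadapted k)) measurable_const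
        measurable_const
    have hgnn : ∀ ω, 0 ≤ (fun ω => if A (k : ℝ) ω ≤ X k ω then (0 : ℝ) else 1) ω := by
      intro ω; by_cases h : A (k : ℝ) ω ≤ X k ω <;> simp [h]
    have hXk1meas : Measurable[ℱ ((k : ℝ) + 1)] (X (k + 1)) := by
      have := hXadapted (k + 1); rwa [castk k] at this
    have hfeq : (fun ω => (if A (k : ℝ) ω ≤ X k ω then (0 : ℝ) else 1) * X (k + 1) ω)
        = X (k + 1) := by
      funext ω
      by_cases h : A (k : ℝ) ω ≤ X k ω
      · simp [h, hXz ω h]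
      · simp [h]
    have hhom := hψhom k hk (X (k + 1))
      (fun ω => if A (k : ℝ) ω ≤ X k ω then (0 : ℝ) else 1) hXk1meas hgmeas hgnn
    rw [hfeq] at hhom
    have hXk : X k = fun ω => (if A (k : ℝ) ω ≤ X k ω then (0 : ℝ) else 1) * X k ω := by
      conv_lhs => rw [hproj k hk, hhom]
      funext ω
      rw [← hproj k hk]
    have h0 : X k ω0 = 0 := by
      have := congrFun hXk ω0
      rw [if_pos hcon] at this
      linarith
    have := hpos ω0
    linarith
  -- main induction: A positive and measurable at integer times
  have key : ∀ k, k ≤ K → Measurable[ℱ (k : ℝ)] (A (k : ℝ)) ∧ ∀ ω, 0 < A (k : ℝ) ω := by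
    intro k
    induction k with
    | zero =>
      intro _
      have he : A ((0 : ℕ) : ℝ) = S 0 := by
        funext ω; rw [Nat.cast_zero, hA0]
      constructor
      · rw [he]
        have : Measurable[ℱ ((0 : ℕ) : ℝ)] (S 0) := by rw [Nat.cast_zero]; exact hSadapted 0
        simpa using this
      · intro ω; rw [he]; exact hSpos 0 ω
    | succ k ih =>
      intro hk1
      have hk : k < K := hk1
      obtain ⟨hm, hp⟩ := ih hk.le
      have hst := strict k hk hm hp
      have hAe : A (((k + 1 : ℕ)) : ℝ)
          = fun ω => (A (k : ℝ) ω - X k ω) * S ((k : ℝ) + 1) ω / S (k : ℝ) ω := by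
        funext ω; rw [castk k]
        exact hArec k hk ((k : ℝ) + 1) (by linarith) le_rfl ω
      constructor
      · rw [hAe, castk k]
        have h1 : Measurable[ℱ ((k : ℝ) + 1)] (A (k : ℝ)) :=
          hm.mono (ℱ.mono (by linarith)) le_rfl
        have h2 : Measurable[ℱ ((k : ℝ) + 1)] (X k) :=
          (hXadapted k).mono (ℱ.mono (by linarith)) le_rfl
        have h3 : Measurable[ℱ ((k : ℝ) + 1)] (S ((k : ℝ) + 1)) :=
          hSadapted _
        have h4 : Measurable[ℱ ((k : ℝ) + 1)] (S (k : ℝ)) :=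
          Measurable.mono (hSadapted (k : ℝ)) (ℱ.mono (by linarith)) le_rfl
        exact ((h1.sub h2).mul h3).div h4
      · intro ω
        rw [hAe]
        have h1 := hst ω
        exact div_pos (mul_pos (by linarith) (hSpos _ ω)) (hSpos _ ω)
  constructor
  · intro t ht0 htK ω
    rcases eq_or_lt_of_le ht0 with h0 | h0
    · rw [← h0, hA0]; exact hSpos 0 ω
    · have hn1 : 1 ≤ ⌈t⌉₊ := Nat.one_le_ceil_iff.mpr h0
      set k := ⌈t⌉₊ - 1 with hkdef
      have hkn : k + 1 = ⌈t⌉₊ := Nat.succ_pred_eq_of_pos hn1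
      have hnK : ⌈t⌉₊ ≤ K := Nat.ceil_le.mpr htK
      have hkK : k < K := by omega
      have hcast : (k : ℝ) + 1 = (⌈t⌉₊ : ℝ) := by
        rw [← hkn]; push_cast; ring
      have hle : t ≤ (k : ℝ) + 1 := by
        rw [hcast]; exact Nat.le_ceil t
      have hlt : (k : ℝ) < t := by
        have := Nat.ceil_lt_add_one ht0
        rw [← hcast] at this
        linarith
      have hst := strict k hkK (key k hkK.le).1 (key k hkK.le).2 ω
      rw [hArec k hkK t hlt hle ω]
      exact div_pos (mul_pos (by linarith) (hSpos t ω)) (hSpos _ ω)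
  · intro k hk ω
    have hp := (key k hk.le).2 ω
    have hst := strict k hk (key k hk.le).1 (key k hk.le).2 ω
    rw [div_lt_one hp]
    exact hst
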